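/- Let λ = (k, −l) ∈ ℤ². The W-orbit of λ satisfies Wλ ∩ (P⁺ ∪ −P⁺) = ∅ if and only if either p(m) > 0 for all m ∈ ℤ or p(m) < 0 for all m ∈ ℤ. -/

import Mathlib

/-- Simple reflection `r1 : (x, y) ↦ (-x, y + b x)` on the weight lattice `ℤ × ℤ`. -/
def r1 (b : ℤ) : Equiv.Perm (ℤ × ℤ) :=
  Function.Involutive.toPerm (fun v => (-v.1, v.2 + b * v.1))
    (fun v => by simp [Prod.ext_iff])

/-- Simple reflection `r2 : (x, y) ↦ (x + a y, -y)` on the weight lattice `ℤ × ℤ`. -/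
def r2 (a : ℤ) : Equiv.Perm (ℤ × ℤ) :=
  Function.Involutive.toPerm (fun v => (v.1 + a * v.2, -v.2))
    (fun v => by simp [Prod.ext_iff])

/-- The Weyl group `W`, the group of bijections of `ℤ × ℤ` generated by `r1` and `r2`. -/
def W (a b : ℤ) : Subgroup (Equiv.Perm (ℤ × ℤ)) :=
  Subgroup.closure {r1 b, r2 a}

/-- The `W`-orbit of a point `v ∈ ℤ × ℤ`. -/
def Worbit (a b : ℤ) (v : ℤ × ℤ) : Set (ℤ × ℤ) :=
  {w : ℤ × ℤ | ∃ g ∈ W a b, g v = w}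

/-- The set of dominant integral weights `P⁺`. -/
def Pplus : Set (ℤ × ℤ) := {v : ℤ × ℤ | 0 ≤ v.1 ∧ 0 ≤ v.2}

/-- The set of antidominant integral weights `-P⁺`. -/
def Pminus : Set (ℤ × ℤ) := {v : ℤ × ℤ | v.1 ≤ 0 ∧ v.2 ≤ 0}


/-- `pSeq a b k l p` says that `p : ℤ → ℤ` is the (unique) sequence with `p 0 = l`,
`p 1 = k`, and `p (m+2) = b * p (m+1) - p m` for even `m`,
`p (m+2) = a * p (m+1) - p m` for odd `m`. -/
def pSeq (a b k l : ℤ) (p : ℤ → ℤ) : Prop :=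
  p 0 = l ∧ p 1 = k ∧
    ∀ m : ℤ, p (m + 2) = (if Even m then b else a) * p (m + 1) - p m

theorem orbit_avoids_dominant_iff_p_pos_or_neg (a b : ℤ) (ha : 2 ≤ a) (hb : 2 ≤ b)
    (hab : 4 < a * b) (k l : ℤ) (p : ℤ → ℤ) (hp : pSeq a b k l p) :
    Worbit a b (k, -l) ∩ (Pplus ∪ Pminus) = ∅ ↔
      (∀ m : ℤ, 0 < p m) ∨ (∀ m : ℤ, p m < 0) := by
  obtain ⟨hp0, hp1, hrec⟩ := hp
  have hEv : ∀ m : ℤ, p (2*m+2) = b * p (2*m+1) - p (2*m) := by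
    intro m
    have h := hrec (2*m)
    rw [if_pos ⟨m, by ring⟩] at h
    exact h
  have hOd : ∀ m : ℤ, p (2*m+1) = a * p (2*m) - p (2*m-1) := by
    intro m
    have h := hrec (2*m-1)
    have hne : ¬ Even (2*m-1) := by
      simp [Int.even_sub, Int.even_mul]
    rw [if_neg hne] at h
    have e1 : 2*m-1+2 = 2*m+1 := by ring
    have e2 : 2*m-1+1 = 2*m := by ring
    rw [e1, e2] at h
    exact h
  have hA3 : ∀ m : ℤ, p (2*m+3) = a * p (2*m+2) - p (2*m+1) := by
    intro m
    have h := hOd (m+1)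
    have e1 : 2*(m+1)+1 = 2*m+3 := by ring
    have e3 : 2*(m+1)-1 = 2*m+1 := by ring
    have e2 : 2*(m+1) = 2*m+2 := by ring
    rw [e1, e3, e2] at h
    exact h
  have hEv' : ∀ m : ℤ, p (2*m) = b * p (2*m-1) - p (2*m-2) := by
    intro m
    have h := hEv (m-1)
    have e1 : 2*(m-1)+2 = 2*m := by ring
    have e2 : 2*(m-1)+1 = 2*m-1 := by ring
    have e3 : 2*(m-1) = 2*m-2 := by ring
    rw [e1, e2, e3] at h
    exact h
  have hr1W : r1 b ∈ W a b := Subgroup.subset_closure (Set.mem_insert _ _)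
  have hr2W : r2 a ∈ W a b := Subgroup.subset_closure (Set.mem_insert_of_mem _ rfl)
  set S : Set (ℤ × ℤ) :=
    {v | ∃ m : ℤ, v = (p (2*m+1), -p (2*m)) ∨ v = (-p (2*m+1), p (2*m+2))} with hS
  have hr1v : ∀ v : ℤ × ℤ, r1 b v = (-v.1, v.2 + b * v.1) := fun v => rfl
  have hr2v : ∀ v : ℤ × ℤ, r2 a v = (v.1 + a * v.2, -v.2) := fun v => rfl
  have hSr1 : ∀ v ∈ S, r1 b v ∈ S := by
    rintro v ⟨m, h | h⟩ <;> subst h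
    · refine ⟨m, Or.inr ?_⟩
      rw [hr1v]
      simp only [Prod.mk.injEq]
      exact ⟨trivial, by rw [hEv m]; ring⟩
    · refine ⟨m, Or.inl ?_⟩
      rw [hr1v]
      simp only [Prod.mk.injEq]
      exact ⟨by ring, by rw [hEv m]; ring⟩
  have hSr2 : ∀ v ∈ S, r2 a v ∈ S := by
    rintro v ⟨m, h | h⟩ <;> subst h
    · refine ⟨m-1, Or.inr ?_⟩
      rw [hr2v]
      have e1 : 2*(m-1)+1 = 2*m-1 := by ring
      have e2 : 2*(m-1)+2 = 2*m := by ring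
      rw [e1, e2]
      simp only [Prod.mk.injEq]
      exact ⟨by rw [hOd m]; ring, by ring⟩
    · refine ⟨m+1, Or.inl ?_⟩
      rw [hr2v]
      have e1 : 2*(m+1)+1 = 2*m+3 := by ring
      have e2 : 2*(m+1) = 2*m+2 := by ring
      rw [e1, e2]
      simp only [Prod.mk.injEq]
      exact ⟨by rw [hA3 m]; ring, trivial⟩
  have hWS : ∀ g ∈ W a b, ∀ v ∈ S, g v ∈ S := by
    intro g hg
    have key : (∀ v ∈ S, g v ∈ S) ∧ (∀ v ∈ S, g⁻¹ v ∈ S) := by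
      refine Subgroup.closure_induction
        (p := fun g _ => (∀ v ∈ S, g v ∈ S) ∧ (∀ v ∈ S, g⁻¹ v ∈ S)) ?_ ?_ ?_ ?_ hg
      · rintro x (rfl | rfl)
        · exact ⟨hSr1, hSr1⟩
        · exact ⟨hSr2, hSr2⟩
      · exact ⟨fun v hv => hv, fun v hv => hv⟩
      · rintro x y hx hy ⟨hx1, hx2⟩ ⟨hy1, hy2⟩
        refine ⟨fun v hv => ?_, fun v hv => ?_⟩
        · rw [Equiv.Perm.mul_apply]; exact hx1 _ (hy1 _ hv)
        · rw [mul_inv_rev, Equiv.Perm.mul_apply]; exact hy2 _ (hx2 _ hv)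
      · rintro x hx ⟨hx1, hx2⟩
        exact ⟨hx2, by simpa using hx1⟩
    exact key.1
  have hv0 : (k, -l) ∈ S := ⟨0, Or.inl (by norm_num [hp0, hp1])⟩
  have horbS : Worbit a b (k, -l) ⊆ S := by
    rintro w ⟨g, hg, rfl⟩
    exact hWS g hg _ hv0
  have hOr1 : ∀ v ∈ Worbit a b (k, -l), r1 b v ∈ Worbit a b (k, -l) := by
    rintro v ⟨g, hg, rfl⟩
    exact ⟨r1 b * g, mul_mem hr1W hg, rfl⟩
  have hOr2 : ∀ v ∈ Worbit a b (k, -l), r2 a v ∈ Worbit a b (k, -l) := by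
    rintro v ⟨g, hg, rfl⟩
    exact ⟨r2 a * g, mul_mem hr2W hg, rfl⟩
  have hAorb : ∀ m : ℤ, (p (2*m+1), -p (2*m)) ∈ Worbit a b (k, -l) := by
    have hstep : ∀ m : ℤ, (p (2*m+1), -p (2*m)) ∈ Worbit a b (k, -l) →
        (p (2*(m+1)+1), -p (2*(m+1))) ∈ Worbit a b (k, -l) := by
      intro m hm
      have h1 := hOr2 _ (hOr1 _ hm)
      have heq : r2 a (r1 b (p (2*m+1), -p (2*m))) = (p (2*(m+1)+1), -p (2*(m+1))) := by
        rw [hr1v, hr2v]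
        have e1 : 2*(m+1)+1 = 2*m+3 := by ring
        have e2 : 2*(m+1) = 2*m+2 := by ring
        rw [e1, e2]
        simp only [Prod.mk.injEq]
        exact ⟨by rw [hA3 m, hEv m]; ring, by rw [hEv m]; ring⟩
      rwa [heq] at h1
    have hstep' : ∀ m : ℤ, (p (2*m+1), -p (2*m)) ∈ Worbit a b (k, -l) →
        (p (2*(m-1)+1), -p (2*(m-1))) ∈ Worbit a b (k, -l) := by
      intro m hm
      have h1 := hOr1 _ (hOr2 _ hm)
      have heq : r1 b (r2 a (p (2*m+1), -p (2*m))) = (p (2*(m-1)+1), -p (2*(m-1))) := by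
        rw [hr2v, hr1v]
        have e1 : 2*(m-1)+1 = 2*m-1 := by ring
        have e2 : 2*(m-1) = 2*m-2 := by ring
        rw [e1, e2]
        simp only [Prod.mk.injEq]
        exact ⟨by rw [hOd m]; ring, by rw [hOd m, hEv' m]; ring⟩
      rwa [heq] at h1
    intro m
    induction m using Int.induction_on with
    | zero => exact ⟨1, one_mem _, by norm_num [hp0, hp1]⟩
    | succ i ih => exact hstep i ih
    | pred i ih => exact hstep' (-i) ih
  have hBorb : ∀ m : ℤ, (-p (2*m+1), p (2*m+2)) ∈ Worbit a b (k, -l) := by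
    intro m
    have h1 := hOr1 _ (hAorb m)
    have heq : r1 b (p (2*m+1), -p (2*m)) = (-p (2*m+1), p (2*m+2)) := by
      rw [hr1v]
      simp only [Prod.mk.injEq]
      exact ⟨trivial, by rw [hEv m]; ring⟩
    rwa [heq] at h1
  constructor
  · intro hemp
    have hnot : ∀ v ∈ Worbit a b (k, -l), v ∉ Pplus ∪ Pminus := by
      intro v hv hvP
      exact Set.eq_empty_iff_forall_notMem.mp hemp v ⟨hv, hvP⟩
    have hpair : ∀ m : ℤ, (0 < p m ∧ 0 < p (m+1)) ∨ (p m < 0 ∧ p (m+1) < 0) := by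
      intro m
      rcases Int.even_or_odd m with ⟨j, hj⟩ | ⟨j, hj⟩
      · have h := hnot _ (hAorb j)
        simp only [Set.mem_union, Pplus, Pminus, Set.mem_setOf_eq, not_or] at h
        have e1 : m = 2*j := by omega
        rw [e1]
        omega
      · have h := hnot _ (hBorb j)
        simp only [Set.mem_union, Pplus, Pminus, Set.mem_setOf_eq, not_or] at h
        have e1 : m = 2*j+1 := by omega
        have e2 : 2*j+1+1 = 2*j+2 := by ring
        rw [e1, e2]
        omega
    rcases hpair 0 with ⟨h0, _⟩ | ⟨h0, _⟩
    · left
      intro m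
      induction m using Int.induction_on with
      | zero => exact h0
      | succ i ih => have := hpair i; omega
      | pred i ih =>
        have h := hpair (-(i:ℤ)-1)
        have e : -(i:ℤ)-1+1 = -(i:ℤ) := by ring
        rw [e] at h
        omega
    · right
      intro m
      induction m using Int.induction_on with
      | zero => exact h0
      | succ i ih => have := hpair i; omega
      | pred i ih =>
        have h := hpair (-(i:ℤ)-1)
        have e : -(i:ℤ)-1+1 = -(i:ℤ) := by ring
        rw [e] at h
        omega
  · intro h
    rw [Set.eq_empty_iff_forall_notMem]
    rintro v ⟨hvO, hvP⟩
    obtain ⟨m, hv | hv⟩ := horbS hvO <;> subst hv <;>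
      simp only [Set.mem_union, Pplus, Pminus, Set.mem_setOf_eq] at hvP <;>
      rcases h with hpos | hneg
    · have h1 := hpos (2*m+1); have h2 := hpos (2*m); omega
    · have h1 := hneg (2*m+1); have h2 := hneg (2*m); omega
    · have h1 := hpos (2*m+1); have h2 := hpos (2*m+2); omega
    · have h1 := hneg (2*m+1); have h2 := hneg (2*m+2); omega
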